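/- Let U ⊆ ℂ³ ≅ ℝ⁶ be open and let z : U → ℂ be a C² function such that for all q = (q¹, q², q³) ∈ U: z(q)²·q̄¹·(q̄² + q̄³) + z(q)·[ q̄¹ + q²·(q̄² + q̄³) − |q¹|² ] + (q³ − q¹·q²) = 0, and moreover 2·z(q)·q̄¹·(q̄² + q̄³) + q̄¹ + q²·(q̄² + q̄³) − |q¹|² ≠ 0 (nonvanishing of the ζ-derivative of the left-hand side at ζ = z(q)). Then z is a harmonic morphism: Σ_{j=1}^{6} (∂z/∂x^j)² = 0 and Σ_{j=1}^{6} ∂²z/(∂x^j)² = 0 at every point of U. -/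

import Mathlib

open Complex

set_option maxHeartbeats 8000000
set_option maxRecDepth 8000

noncomputable section

@[reducible] def qAf (z : (Fin 3 → ℂ) → ℂ) (p : Fin 3 → ℂ) : ℂ :=
  2 * z p * (starRingEnd ℂ) (p 0) * ((starRingEnd ℂ) (p 1) + (starRingEnd ℂ) (p 2))
    + (starRingEnd ℂ) (p 0) + p 1 * ((starRingEnd ℂ) (p 1) + (starRingEnd ℂ) (p 2))
    - p 0 * (starRingEnd ℂ) (p 0)
@[reducible] def qNf (z : (Fin 3 → ℂ) → ℂ) (p v : Fin 3 → ℂ) : ℂ :=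
  (-(z p) * (starRingEnd ℂ) (p 0) - p 1) * v 0
  + (z p * ((starRingEnd ℂ) (p 1) + (starRingEnd ℂ) (p 2)) - p 0) * v 1 + v 2
  + ((z p) ^ 2 * ((starRingEnd ℂ) (p 1) + (starRingEnd ℂ) (p 2)) + z p * (1 - p 0)) * (starRingEnd ℂ) (v 0)
  + ((z p) ^ 2 * (starRingEnd ℂ) (p 0) + z p * p 1) * ((starRingEnd ℂ) (v 1) + (starRingEnd ℂ) (v 2))

/-- derivative of `t ↦ qAf z (q + t•v)` at `0`, where `ℓ = fderiv ℝ z q v`. -/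
@[reducible] def qDA (z : (Fin 3 → ℂ) → ℂ) (q v : Fin 3 → ℂ) (ℓ : ℂ) : ℂ :=
  2 * ℓ * (starRingEnd ℂ) (q 0) * ((starRingEnd ℂ) (q 1) + (starRingEnd ℂ) (q 2))
  + 2 * z q * (starRingEnd ℂ) (v 0) * ((starRingEnd ℂ) (q 1) + (starRingEnd ℂ) (q 2))
  + 2 * z q * (starRingEnd ℂ) (q 0) * ((starRingEnd ℂ) (v 1) + (starRingEnd ℂ) (v 2))
  + (starRingEnd ℂ) (v 0)
  + v 1 * ((starRingEnd ℂ) (q 1) + (starRingEnd ℂ) (q 2))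
  + q 1 * ((starRingEnd ℂ) (v 1) + (starRingEnd ℂ) (v 2))
  - v 0 * (starRingEnd ℂ) (q 0) - q 0 * (starRingEnd ℂ) (v 0)

/-- derivative of `t ↦ qNf z (q + t•v) v` at `0`, where `ℓ = fderiv ℝ z q v`. -/
@[reducible] def qDN (z : (Fin 3 → ℂ) → ℂ) (q v : Fin 3 → ℂ) (ℓ : ℂ) : ℂ :=
  (-ℓ * (starRingEnd ℂ) (q 0) - z q * (starRingEnd ℂ) (v 0) - v 1) * v 0
  + (ℓ * ((starRingEnd ℂ) (q 1) + (starRingEnd ℂ) (q 2))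
      + z q * ((starRingEnd ℂ) (v 1) + (starRingEnd ℂ) (v 2)) - v 0) * v 1
  + (2 * z q * ℓ * ((starRingEnd ℂ) (q 1) + (starRingEnd ℂ) (q 2))
      + (z q) ^ 2 * ((starRingEnd ℂ) (v 1) + (starRingEnd ℂ) (v 2))
      + ℓ * (1 - q 0) - z q * v 0) * (starRingEnd ℂ) (v 0)
  + (2 * z q * ℓ * (starRingEnd ℂ) (q 0) + (z q) ^ 2 * (starRingEnd ℂ) (v 0)
      + ℓ * q 1 + z q * v 1) * ((starRingEnd ℂ) (v 1) + (starRingEnd ℂ) (v 2))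

def qP (z : (Fin 3 → ℂ) → ℂ) (p : Fin 3 → ℂ) : Fin 3 → ℂ :=
  ![-(z p) * (starRingEnd ℂ) (p 0) - p 1,
    z p * ((starRingEnd ℂ) (p 1) + (starRingEnd ℂ) (p 2)) - p 0, 1]
def qQ (z : (Fin 3 → ℂ) → ℂ) (p : Fin 3 → ℂ) : Fin 3 → ℂ :=
  ![(z p) ^ 2 * ((starRingEnd ℂ) (p 1) + (starRingEnd ℂ) (p 2)) + z p * (1 - p 0),
    (z p) ^ 2 * (starRingEnd ℂ) (p 0) + z p * p 1,
    (z p) ^ 2 * (starRingEnd ℂ) (p 0) + z p * p 1]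

theorem key1 (U : Set (Fin 3 → ℂ)) (hU : IsOpen U)
    (z : (Fin 3 → ℂ) → ℂ) (hz : ContDiffOn ℝ 2 z U)
    (hsol : ∀ q ∈ U,
      (z q) ^ 2 * (starRingEnd ℂ) (q 0) * ((starRingEnd ℂ) (q 1) + (starRingEnd ℂ) (q 2))
        + z q * ((starRingEnd ℂ) (q 0)
            + q 1 * ((starRingEnd ℂ) (q 1) + (starRingEnd ℂ) (q 2))
            - q 0 * (starRingEnd ℂ) (q 0))
        + (q 2 - q 0 * q 1) = 0)
    (p : Fin 3 → ℂ) (hp : p ∈ U) (v : Fin 3 → ℂ) :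
    qAf z p * fderiv ℝ z p v + qNf z p v = 0 := by
  have hzd : DifferentiableAt ℝ z p :=
    (hz.differentiableOn (by norm_num)).differentiableAt (hU.mem_nhds hp)
  have hz' : HasFDerivAt z (fderiv ℝ z p) p := hzd.hasFDerivAt
  have hline : HasDerivAt (fun t : ℝ => p + t • v) v 0 := by
    simpa using ((hasDerivAt_id (0 : ℝ)).smul_const v).const_add p
  have hψ : HasDerivAt (fun t : ℝ => z (p + t • v)) (fderiv ℝ z p v) 0 := by
    have : HasFDerivAt z (fderiv ℝ z p) (p + (0:ℝ) • v) := by simpa using hz'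
    simpa [Function.comp_def] using this.comp_hasDerivAt 0 hline
  have hcomp : ∀ j : Fin 3, HasDerivAt (fun t : ℝ => (p + t • v) j) (v j) 0 := by
    intro j
    have := (ContinuousLinearMap.proj (R := ℝ) (φ := fun _ : Fin 3 => ℂ) j).hasFDerivAt
      (x := p + (0:ℝ) • v)
    simpa [Function.comp_def] using this.comp_hasDerivAt 0 hline
  have hconj : ∀ j : Fin 3,
      HasDerivAt (fun t : ℝ => (starRingEnd ℂ) ((p + t • v) j)) ((starRingEnd ℂ) (v j)) 0 :=
    fun j => (hcomp j).star
  have hsq : HasDerivAt (fun t : ℝ => z (p + t • v) ^ 2)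
      (fderiv ℝ z p v * z (p + (0:ℝ) • v) + z (p + (0:ℝ) • v) * fderiv ℝ z p v) 0 := by
    simpa only [pow_two, Pi.mul_def] using hψ.mul hψ
  have h1 := (hsq.mul (hconj 0)).mul ((hconj 1).add (hconj 2))
  have h2 := hψ.mul (((hconj 0).add ((hcomp 1).mul ((hconj 1).add (hconj 2)))).sub
      ((hcomp 0).mul (hconj 0)))
  have h3 := (hcomp 2).sub ((hcomp 0).mul (hcomp 1))
  have hG := (h1.add h2).add h3
  have hzero : (fun t : ℝ => z (p + t • v) ^ 2 * (starRingEnd ℂ) ((p + t • v) 0) *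
        ((starRingEnd ℂ) ((p + t • v) 1) + (starRingEnd ℂ) ((p + t • v) 2))
      + z (p + t • v) * ((starRingEnd ℂ) ((p + t • v) 0)
          + (p + t • v) 1 * ((starRingEnd ℂ) ((p + t • v) 1) + (starRingEnd ℂ) ((p + t • v) 2))
          - (p + t • v) 0 * (starRingEnd ℂ) ((p + t • v) 0))
      + ((p + t • v) 2 - (p + t • v) 0 * (p + t • v) 1)) =ᶠ[nhds (0:ℝ)] fun _ => 0 := by
    have hcont : Continuous fun t : ℝ => p + t • v :=
      continuous_const.add (continuous_id.smul continuous_const)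
    have : ∀ᶠ t : ℝ in nhds 0, p + t • v ∈ U := by
      have := hcont.continuousAt (x := (0:ℝ))
      have h0 : p + (0:ℝ) • v ∈ U := by simpa using hp
      exact this.eventually_mem (hU.mem_nhds h0)
    filter_upwards [this] with t ht
    exact hsol _ ht
  have hD := hG.deriv
  erw [hzero.deriv_eq, deriv_const] at hD
  simp only [zero_smul, add_zero, Pi.add_apply, Pi.mul_apply, Pi.sub_apply, Pi.zero_apply] at hD
  simp only [qAf, qNf]
  linear_combination -hD

theorem qNf_single_one (z : (Fin 3 → ℂ) → ℂ) (p : Fin 3 → ℂ) (j : Fin 3) :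
    qNf z p (Pi.single j 1) = qP z p j + qQ z p j := by
  fin_cases j <;> simp [qNf, qP, qQ, Pi.single_apply] <;> ring

theorem qNf_single_I (z : (Fin 3 → ℂ) → ℂ) (p : Fin 3 → ℂ) (j : Fin 3) :
    qNf z p (Pi.single j Complex.I) = Complex.I * (qP z p j - qQ z p j) := by
  fin_cases j <;> simp [qNf, qP, qQ, Pi.single_apply, Complex.conj_I] <;> ring

theorem pq_zero (z : (Fin 3 → ℂ) → ℂ) (q : Fin 3 → ℂ) :
    qP z q 0 * qQ z q 0 + qP z q 1 * qQ z q 1 + qP z q 2 * qQ z q 2 = 0 := by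
  simp only [qP, qQ]
  norm_num [Matrix.cons_val_zero, Matrix.cons_val_one, Matrix.cons_val_two, Matrix.tail_cons, Matrix.head_cons]
  ring

theorem part1 (z : (Fin 3 → ℂ) → ℂ) (q : Fin 3 → ℂ)
    (hA : qAf z q ≠ 0)
    (hK : ∀ v, qAf z q * fderiv ℝ z q v + qNf z q v = 0) :
    (∑ j, ((fderiv ℝ z q (Pi.single j 1)) ^ 2
          + (fderiv ℝ z q (Pi.single j Complex.I)) ^ 2) = 0) := by
  have e1 : ∀ j, qAf z q * fderiv ℝ z q (Pi.single j 1) = -(qP z q j + qQ z q j) := by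
    intro j; have h := hK (Pi.single j 1); rw [qNf_single_one] at h; linear_combination h
  have eI : ∀ j, qAf z q * fderiv ℝ z q (Pi.single j Complex.I)
      = -(Complex.I * (qP z q j - qQ z q j)) := by
    intro j; have h := hK (Pi.single j Complex.I); rw [qNf_single_I] at h; linear_combination h
  have H : qAf z q ^ 2 * (∑ j, ((fderiv ℝ z q (Pi.single j 1)) ^ 2
      + (fderiv ℝ z q (Pi.single j Complex.I)) ^ 2)) = 0 := by
    rw [Fin.sum_univ_three]
    linear_combination
      (qAf z q * fderiv ℝ z q (Pi.single 0 1) - (qP z q 0 + qQ z q 0)) * e1 0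
      + (qAf z q * fderiv ℝ z q (Pi.single 1 1) - (qP z q 1 + qQ z q 1)) * e1 1
      + (qAf z q * fderiv ℝ z q (Pi.single 2 1) - (qP z q 2 + qQ z q 2)) * e1 2
      + (qAf z q * fderiv ℝ z q (Pi.single 0 Complex.I) - Complex.I * (qP z q 0 - qQ z q 0)) * eI 0
      + (qAf z q * fderiv ℝ z q (Pi.single 1 Complex.I) - Complex.I * (qP z q 1 - qQ z q 1)) * eI 1
      + (qAf z q * fderiv ℝ z q (Pi.single 2 Complex.I) - Complex.I * (qP z q 2 - qQ z q 2)) * eI 2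
      + ((qP z q 0 - qQ z q 0) ^ 2 + (qP z q 1 - qQ z q 1) ^ 2 + (qP z q 2 - qQ z q 2) ^ 2)
          * Complex.I_sq
      + (4 : ℂ) * pq_zero z q
  rcases mul_eq_zero.mp H with h' | h'
  · exact absurd h' (pow_ne_zero 2 hA)
  · exact h'

theorem key2 (U : Set (Fin 3 → ℂ)) (hU : IsOpen U)
    (z : (Fin 3 → ℂ) → ℂ) (hz : ContDiffOn ℝ 2 z U)
    (hK : ∀ p ∈ U, ∀ v, qAf z p * fderiv ℝ z p v + qNf z p v = 0)
    (hreg : ∀ p ∈ U, qAf z p ≠ 0)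
    (q : Fin 3 → ℂ) (hq : q ∈ U) (v : Fin 3 → ℂ) :
    qAf z q ^ 2 * fderiv ℝ (fun p => fderiv ℝ z p v) q v
      = -(qDN z q v (fderiv ℝ z q v)) * qAf z q
        + qNf z q v * qDA z q v (fderiv ℝ z q v) := by
  have hA : qAf z q ≠ 0 := hreg q hq
  have hzd : DifferentiableAt ℝ z q :=
    (hz.differentiableOn (by norm_num)).differentiableAt (hU.mem_nhds hq)
  have hz' : HasFDerivAt z (fderiv ℝ z q) q := hzd.hasFDerivAt
  have hline : HasDerivAt (fun t : ℝ => q + t • v) v 0 := by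
    simpa using ((hasDerivAt_id (0 : ℝ)).smul_const v).const_add q
  have hψ : HasDerivAt (fun t : ℝ => z (q + t • v)) (fderiv ℝ z q v) 0 := by
    have h0 : HasFDerivAt z (fderiv ℝ z q) (q + (0:ℝ) • v) := by simpa using hz'
    simpa [Function.comp_def] using h0.comp_hasDerivAt 0 hline
  have hcomp : ∀ j : Fin 3, HasDerivAt (fun t : ℝ => (q + t • v) j) (v j) 0 := by
    intro j
    have := (ContinuousLinearMap.proj (R := ℝ) (φ := fun _ : Fin 3 => ℂ) j).hasFDerivAt
      (x := q + (0:ℝ) • v)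
    simpa [Function.comp_def] using this.comp_hasDerivAt 0 hline
  have hconj : ∀ j : Fin 3,
      HasDerivAt (fun t : ℝ => (starRingEnd ℂ) ((q + t • v) j)) ((starRingEnd ℂ) (v j)) 0 :=
    fun j => (hcomp j).star
  have hsq : HasDerivAt (fun t : ℝ => z (q + t • v) ^ 2)
      (fderiv ℝ z q v * z (q + (0:ℝ) • v) + z (q + (0:ℝ) • v) * fderiv ℝ z q v) 0 := by
    simpa only [pow_two, Pi.mul_def] using hψ.mul hψ
  -- numerator: t ↦ qNf z (q + t•v) v
  have hterm1 := ((hψ.neg.mul (hconj 0)).sub (hcomp 1)).mul_const (v 0)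
  have hterm2 := ((hψ.mul ((hconj 1).add (hconj 2))).sub (hcomp 0)).mul_const (v 1)
  have hterm4 := ((hsq.mul ((hconj 1).add (hconj 2))).add
      (hψ.mul ((hasDerivAt_const (0:ℝ) (1:ℂ)).sub (hcomp 0)))).mul_const ((starRingEnd ℂ) (v 0))
  have hterm5 := ((hsq.mul (hconj 0)).add (hψ.mul (hcomp 1))).mul_const
      ((starRingEnd ℂ) (v 1) + (starRingEnd ℂ) (v 2))
  have hNder0 := (((hterm1.add hterm2).add (hasDerivAt_const (0:ℝ) (v 2))).add hterm4).add hterm5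
  -- denominator: t ↦ qAf z (q + t•v)
  have hAder0 := (((((hψ.const_mul 2).mul (hconj 0)).mul ((hconj 1).add (hconj 2))).add
      (hconj 0)).add ((hcomp 1).mul ((hconj 1).add (hconj 2)))).sub ((hcomp 0).mul (hconj 0))
  have hden0 : qAf z (q + (0:ℝ) • v) ≠ 0 := by simpa using hA
  have hdiv := (hNder0.neg).div hAder0 hden0
  -- eventual equality with the implicit-function formula
  have heq : (fun p => fderiv ℝ z p v) =ᶠ[nhds q]
      (fun p => -qNf z p v / qAf z p) := by
    filter_upwards [hU.mem_nhds hq] with p hp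
    have h1 := hK p hp v
    have h2 := hreg p hp
    rw [eq_div_iff h2]
    linear_combination h1
  -- differentiability of the formula
  have hdj : ∀ j : Fin 3, DifferentiableAt ℝ (fun p : Fin 3 → ℂ => p j) q :=
    fun j => (ContinuousLinearMap.proj (R := ℝ) (φ := fun _ : Fin 3 => ℂ) j).differentiableAt
  have hcj : ∀ j : Fin 3, DifferentiableAt ℝ (fun p : Fin 3 → ℂ => (starRingEnd ℂ) (p j)) q :=
    fun j => (hdj j).star
  have hNdiff : DifferentiableAt ℝ (fun p => qNf z p v) q := by
    unfold qNf
    exact (((((hzd.neg.mul (hcj 0)).sub (hdj 1)).mul_const (v 0)).add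
        (((hzd.mul ((hcj 1).add (hcj 2))).sub (hdj 0)).mul_const (v 1))).add
        (differentiableAt_const (v 2))).add
        ((((hzd.pow 2).mul ((hcj 1).add (hcj 2))).add
          (hzd.mul ((differentiableAt_const (1:ℂ)).sub (hdj 0)))).mul_const _) |>.add
        ((((hzd.pow 2).mul (hcj 0)).add (hzd.mul (hdj 1))).mul_const _)
  have hAdiff : DifferentiableAt ℝ (fun p => qAf z p) q := by
    unfold qAf
    exact (((((hzd.const_mul 2).mul (hcj 0)).mul ((hcj 1).add (hcj 2))).add (hcj 0)).add
      ((hdj 1).mul ((hcj 1).add (hcj 2)))).sub ((hdj 0).mul (hcj 0))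
  have hgdiff : DifferentiableAt ℝ (fun p => -qNf z p v / qAf z p) q := by
    have h1 : (fun p => -qNf z p v / qAf z p)
        = (fun p => -qNf z p v * (qAf z p)⁻¹) := by
      funext p; rw [div_eq_mul_inv]
    rw [h1]
    exact (hNdiff.neg).mul (hAdiff.inv hA)
  have hgd : HasFDerivAt (fun p => -qNf z p v / qAf z p)
      (fderiv ℝ (fun p => -qNf z p v / qAf z p) q) q := hgdiff.hasFDerivAt
  have hder2 : HasDerivAt (fun t : ℝ => -qNf z (q + t • v) v / qAf z (q + t • v))
      (fderiv ℝ (fun p => -qNf z p v / qAf z p) q v) 0 := by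
    have h0 : HasFDerivAt (fun p => -qNf z p v / qAf z p)
        (fderiv ℝ (fun p => -qNf z p v / qAf z p) q) (q + (0:ℝ) • v) := by
      rw [show q + (0:ℝ) • v = q by simp]
      exact hgd
    simpa only [Function.comp_def] using h0.comp_hasDerivAt 0 hline
  have huniq := hdiv.unique hder2
  have hfd : fderiv ℝ (fun p => fderiv ℝ z p v) q v
      = fderiv ℝ (fun p => -qNf z p v / qAf z p) q v := by
    rw [heq.fderiv_eq]
  rw [hfd, ← huniq]
  simp only [zero_smul, add_zero, Pi.add_apply, Pi.mul_apply, Pi.sub_apply, Pi.neg_apply, Pi.zero_apply]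
  rw [mul_comm, div_mul_cancel₀ _ (pow_ne_zero 2 hA)]
  simp only [qNf, qAf, qDN, qDA]
  ring


theorem key3 (U : Set (Fin 3 → ℂ)) (hU : IsOpen U)
    (z : (Fin 3 → ℂ) → ℂ) (hz : ContDiffOn ℝ 2 z U)
    (hK : ∀ p ∈ U, ∀ v, qAf z p * fderiv ℝ z p v + qNf z p v = 0)
    (hreg : ∀ p ∈ U, qAf z p ≠ 0)
    (q : Fin 3 → ℂ) (hq : q ∈ U) (v : Fin 3 → ℂ) :
    qAf z q ^ 3 * fderiv ℝ (fun p => fderiv ℝ z p v) q v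
      = -(qAf z q * (qAf z q * qDN z q v 0
            - qNf z q v * (qDN z q v 1 - qDN z q v 0)))
        + qNf z q v * (qAf z q * qDA z q v 0
            - qNf z q v * (qDA z q v 1 - qDA z q v 0)) := by
  have h := key2 U hU z hz hK hreg q hq v
  have hk := hK q hq v
  simp only [qDN, qDA] at h ⊢
  linear_combination (qAf z q) * h
    + ((-(-(starRingEnd ℂ) (q 0) * v 0
          + ((starRingEnd ℂ) (q 1) + (starRingEnd ℂ) (q 2)) * v 1
          + (2 * z q * ((starRingEnd ℂ) (q 1) + (starRingEnd ℂ) (q 2)) + 1 - q 0)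
              * (starRingEnd ℂ) (v 0)
          + (2 * z q * (starRingEnd ℂ) (q 0) + q 1)
              * ((starRingEnd ℂ) (v 1) + (starRingEnd ℂ) (v 2)))) * qAf z q
        + (2 * (starRingEnd ℂ) (q 0) * ((starRingEnd ℂ) (q 1) + (starRingEnd ℂ) (q 2)))
            * qNf z q v) * hk


theorem final_sum (U : Set (Fin 3 → ℂ)) (hU : IsOpen U)
    (z : (Fin 3 → ℂ) → ℂ) (hz : ContDiffOn ℝ 2 z U)
    (hK : ∀ p ∈ U, ∀ v, qAf z p * fderiv ℝ z p v + qNf z p v = 0)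
    (hreg : ∀ p ∈ U, qAf z p ≠ 0)
    (q : Fin 3 → ℂ) (hq : q ∈ U) :
    (∑ j, (fderiv ℝ (fun p => fderiv ℝ z p (Pi.single j 1)) q (Pi.single j 1)
          + fderiv ℝ (fun p => fderiv ℝ z p (Pi.single j Complex.I)) q
              (Pi.single j Complex.I)) = 0) := by
  have hA : qAf z q ≠ 0 := hreg q hq
  have e01 := key3 U hU z hz hK hreg q hq (Pi.single 0 1)
  have e0I := key3 U hU z hz hK hreg q hq (Pi.single 0 Complex.I)
  have e11 := key3 U hU z hz hK hreg q hq (Pi.single 1 1)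
  have e1I := key3 U hU z hz hK hreg q hq (Pi.single 1 Complex.I)
  have e21 := key3 U hU z hz hK hreg q hq (Pi.single 2 1)
  have e2I := key3 U hU z hz hK hreg q hq (Pi.single 2 Complex.I)
  have H : qAf z q ^ 3 *
      ((fderiv ℝ (fun p => fderiv ℝ z p (Pi.single 0 1)) q (Pi.single 0 1)
          + fderiv ℝ (fun p => fderiv ℝ z p (Pi.single 0 Complex.I)) q (Pi.single 0 Complex.I))
        + (fderiv ℝ (fun p => fderiv ℝ z p (Pi.single 1 1)) q (Pi.single 1 1)
          + fderiv ℝ (fun p => fderiv ℝ z p (Pi.single 1 Complex.I)) q (Pi.single 1 Complex.I))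
        + (fderiv ℝ (fun p => fderiv ℝ z p (Pi.single 2 1)) q (Pi.single 2 1)
          + fderiv ℝ (fun p => fderiv ℝ z p (Pi.single 2 Complex.I)) q (Pi.single 2 Complex.I))) = 0 := by
    simp (config := { maxSteps := 10000000 }) only [qDN, qDA, qNf, Pi.single_apply,
      reduceIte, Fin.reduceEq, map_zero, map_one, Complex.conj_I, mul_zero, zero_mul,
      add_zero, zero_add, mul_one, one_mul, sub_zero, neg_zero] at e01 e0I e11 e1I e21 e2I
    linear_combination e01 + e0I + e11 + e1I + e21 + e2I
      + ((-2 : ℂ) * ((starRingEnd ℂ) (q 0)) * ((starRingEnd ℂ) (q 2))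
    + (-2 : ℂ) * ((starRingEnd ℂ) (q 0)) * ((starRingEnd ℂ) (q 1))
    + (2 : ℂ) * (q 1) * ((starRingEnd ℂ) (q 0)) * (qAf z q)
    + (-2 : ℂ) * (q 1) * (q 1) * ((starRingEnd ℂ) (q 0)) * ((starRingEnd ℂ) (q 2))
    + (-2 : ℂ) * (q 1) * (q 1) * ((starRingEnd ℂ) (q 0)) * ((starRingEnd ℂ) (q 1))
    + (-2 : ℂ) * (q 0) * ((starRingEnd ℂ) (q 2)) * (qAf z q)
    + (-2 : ℂ) * (q 0) * ((starRingEnd ℂ) (q 1)) * (qAf z q)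
    + (-2 : ℂ) * (q 0) * (q 0) * ((starRingEnd ℂ) (q 0)) * ((starRingEnd ℂ) (q 2))
    + (-2 : ℂ) * (q 0) * (q 0) * ((starRingEnd ℂ) (q 0)) * ((starRingEnd ℂ) (q 1))
    + (2 : ℂ) * (z q) * (qAf z q)
    + (2 : ℂ) * (z q) * ((starRingEnd ℂ) (q 2)) * ((starRingEnd ℂ) (q 2)) * (qAf z q)
    + (4 : ℂ) * (z q) * ((starRingEnd ℂ) (q 1)) * ((starRingEnd ℂ) (q 2)) * (qAf z q)
    + (2 : ℂ) * (z q) * ((starRingEnd ℂ) (q 1)) * ((starRingEnd ℂ) (q 1)) * (qAf z q)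
    + (2 : ℂ) * (z q) * ((starRingEnd ℂ) (q 0)) * ((starRingEnd ℂ) (q 0)) * (qAf z q)
    + (-4 : ℂ) * (z q) * (q 1) * ((starRingEnd ℂ) (q 0)) * ((starRingEnd ℂ) (q 0)) * ((starRingEnd ℂ) (q 2))
    + (-4 : ℂ) * (z q) * (q 1) * ((starRingEnd ℂ) (q 0)) * ((starRingEnd ℂ) (q 0)) * ((starRingEnd ℂ) (q 1))
    + (4 : ℂ) * (z q) * (q 1) * (q 1) * (qAf z q)
    + (-4 : ℂ) * (z q) * (q 0) * (qAf z q)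
    + (4 : ℂ) * (z q) * (q 0) * ((starRingEnd ℂ) (q 0)) * ((starRingEnd ℂ) (q 2)) * ((starRingEnd ℂ) (q 2))
    + (8 : ℂ) * (z q) * (q 0) * ((starRingEnd ℂ) (q 0)) * ((starRingEnd ℂ) (q 1)) * ((starRingEnd ℂ) (q 2))
    + (4 : ℂ) * (z q) * (q 0) * ((starRingEnd ℂ) (q 0)) * ((starRingEnd ℂ) (q 1)) * ((starRingEnd ℂ) (q 1))
    + (2 : ℂ) * (z q) * (q 0) * (q 0) * (qAf z q)
    + (6 : ℂ) * (z q) * (z q) * ((starRingEnd ℂ) (q 2)) * (qAf z q)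
    + (6 : ℂ) * (z q) * (z q) * ((starRingEnd ℂ) (q 1)) * (qAf z q)
    + (-2 : ℂ) * (z q) * (z q) * ((starRingEnd ℂ) (q 0)) * ((starRingEnd ℂ) (q 2))
    + (-2 : ℂ) * (z q) * (z q) * ((starRingEnd ℂ) (q 0)) * ((starRingEnd ℂ) (q 2)) * ((starRingEnd ℂ) (q 2)) * ((starRingEnd ℂ) (q 2))
    + (-2 : ℂ) * (z q) * (z q) * ((starRingEnd ℂ) (q 0)) * ((starRingEnd ℂ) (q 1))
    + (-6 : ℂ) * (z q) * (z q) * ((starRingEnd ℂ) (q 0)) * ((starRingEnd ℂ) (q 1)) * ((starRingEnd ℂ) (q 2)) * ((starRingEnd ℂ) (q 2))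
    + (-6 : ℂ) * (z q) * (z q) * ((starRingEnd ℂ) (q 0)) * ((starRingEnd ℂ) (q 1)) * ((starRingEnd ℂ) (q 1)) * ((starRingEnd ℂ) (q 2))
    + (-2 : ℂ) * (z q) * (z q) * ((starRingEnd ℂ) (q 0)) * ((starRingEnd ℂ) (q 1)) * ((starRingEnd ℂ) (q 1)) * ((starRingEnd ℂ) (q 1))
    + (-2 : ℂ) * (z q) * (z q) * ((starRingEnd ℂ) (q 0)) * ((starRingEnd ℂ) (q 0)) * ((starRingEnd ℂ) (q 0)) * ((starRingEnd ℂ) (q 2))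
    + (-2 : ℂ) * (z q) * (z q) * ((starRingEnd ℂ) (q 0)) * ((starRingEnd ℂ) (q 0)) * ((starRingEnd ℂ) (q 0)) * ((starRingEnd ℂ) (q 1))
    + (12 : ℂ) * (z q) * (z q) * (q 1) * ((starRingEnd ℂ) (q 0)) * (qAf z q)
    + (-4 : ℂ) * (z q) * (z q) * (q 1) * (q 1) * ((starRingEnd ℂ) (q 0)) * ((starRingEnd ℂ) (q 2))
    + (-4 : ℂ) * (z q) * (z q) * (q 1) * (q 1) * ((starRingEnd ℂ) (q 0)) * ((starRingEnd ℂ) (q 1))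
    + (-6 : ℂ) * (z q) * (z q) * (q 0) * ((starRingEnd ℂ) (q 2)) * (qAf z q)
    + (-6 : ℂ) * (z q) * (z q) * (q 0) * ((starRingEnd ℂ) (q 1)) * (qAf z q)
    + (4 : ℂ) * (z q) * (z q) * (q 0) * ((starRingEnd ℂ) (q 0)) * ((starRingEnd ℂ) (q 2))
    + (4 : ℂ) * (z q) * (z q) * (q 0) * ((starRingEnd ℂ) (q 0)) * ((starRingEnd ℂ) (q 1))
    + (-2 : ℂ) * (z q) * (z q) * (q 0) * (q 0) * ((starRingEnd ℂ) (q 0)) * ((starRingEnd ℂ) (q 2))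
    + (-2 : ℂ) * (z q) * (z q) * (q 0) * (q 0) * ((starRingEnd ℂ) (q 0)) * ((starRingEnd ℂ) (q 1))
    + (4 : ℂ) * (z q) * (z q) * (z q) * ((starRingEnd ℂ) (q 2)) * ((starRingEnd ℂ) (q 2)) * (qAf z q)
    + (8 : ℂ) * (z q) * (z q) * (z q) * ((starRingEnd ℂ) (q 1)) * ((starRingEnd ℂ) (q 2)) * (qAf z q)
    + (4 : ℂ) * (z q) * (z q) * (z q) * ((starRingEnd ℂ) (q 1)) * ((starRingEnd ℂ) (q 1)) * (qAf z q)
    + (-4 : ℂ) * (z q) * (z q) * (z q) * ((starRingEnd ℂ) (q 0)) * ((starRingEnd ℂ) (q 2)) * ((starRingEnd ℂ) (q 2))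
    + (-8 : ℂ) * (z q) * (z q) * (z q) * ((starRingEnd ℂ) (q 0)) * ((starRingEnd ℂ) (q 1)) * ((starRingEnd ℂ) (q 2))
    + (-4 : ℂ) * (z q) * (z q) * (z q) * ((starRingEnd ℂ) (q 0)) * ((starRingEnd ℂ) (q 1)) * ((starRingEnd ℂ) (q 1))
    + (8 : ℂ) * (z q) * (z q) * (z q) * ((starRingEnd ℂ) (q 0)) * ((starRingEnd ℂ) (q 0)) * (qAf z q)
    + (-8 : ℂ) * (z q) * (z q) * (z q) * (q 1) * ((starRingEnd ℂ) (q 0)) * ((starRingEnd ℂ) (q 0)) * ((starRingEnd ℂ) (q 2))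
    + (-8 : ℂ) * (z q) * (z q) * (z q) * (q 1) * ((starRingEnd ℂ) (q 0)) * ((starRingEnd ℂ) (q 0)) * ((starRingEnd ℂ) (q 1))
    + (4 : ℂ) * (z q) * (z q) * (z q) * (q 0) * ((starRingEnd ℂ) (q 0)) * ((starRingEnd ℂ) (q 2)) * ((starRingEnd ℂ) (q 2))
    + (8 : ℂ) * (z q) * (z q) * (z q) * (q 0) * ((starRingEnd ℂ) (q 0)) * ((starRingEnd ℂ) (q 1)) * ((starRingEnd ℂ) (q 2))
    + (4 : ℂ) * (z q) * (z q) * (z q) * (q 0) * ((starRingEnd ℂ) (q 0)) * ((starRingEnd ℂ) (q 1)) * ((starRingEnd ℂ) (q 1))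
    + (-2 : ℂ) * (z q) * (z q) * (z q) * (z q) * ((starRingEnd ℂ) (q 0)) * ((starRingEnd ℂ) (q 2)) * ((starRingEnd ℂ) (q 2)) * ((starRingEnd ℂ) (q 2))
    + (-6 : ℂ) * (z q) * (z q) * (z q) * (z q) * ((starRingEnd ℂ) (q 0)) * ((starRingEnd ℂ) (q 1)) * ((starRingEnd ℂ) (q 2)) * ((starRingEnd ℂ) (q 2))
    + (-6 : ℂ) * (z q) * (z q) * (z q) * (z q) * ((starRingEnd ℂ) (q 0)) * ((starRingEnd ℂ) (q 1)) * ((starRingEnd ℂ) (q 1)) * ((starRingEnd ℂ) (q 2))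
    + (-2 : ℂ) * (z q) * (z q) * (z q) * (z q) * ((starRingEnd ℂ) (q 0)) * ((starRingEnd ℂ) (q 1)) * ((starRingEnd ℂ) (q 1)) * ((starRingEnd ℂ) (q 1))
    + (-4 : ℂ) * (z q) * (z q) * (z q) * (z q) * ((starRingEnd ℂ) (q 0)) * ((starRingEnd ℂ) (q 0)) * ((starRingEnd ℂ) (q 0)) * ((starRingEnd ℂ) (q 2))
    + (-4 : ℂ) * (z q) * (z q) * (z q) * (z q) * ((starRingEnd ℂ) (q 0)) * ((starRingEnd ℂ) (q 0)) * ((starRingEnd ℂ) (q 0)) * ((starRingEnd ℂ) (q 1))) * Complex.I_sq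
  rw [Fin.sum_univ_three]
  rcases mul_eq_zero.mp H with h' | h'
  · exact absurd h' (pow_ne_zero 3 hA)
  · exact h'

/-- Example 3.6 of the paper. On a domain `U ⊆ ℂ³ ≅ ℝ⁶`, any C²
solution `z` of the quadratic equation
`z²·q̄¹(q̄² + q̄³) + z·(q̄¹ + q²(q̄² + q̄³) − |q¹|²) + (q³ − q¹q²) = 0`
with nonvanishing `ζ`-derivative is a harmonic morphism. -/
theorem example_R6_quadratic_harmonic_morphism
    (U : Set (Fin 3 → ℂ)) (hU : IsOpen U)
    (z : (Fin 3 → ℂ) → ℂ) (hz : ContDiffOn ℝ 2 z U)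
    (hsol : ∀ q ∈ U,
      (z q) ^ 2 * (starRingEnd ℂ) (q 0) * ((starRingEnd ℂ) (q 1) + (starRingEnd ℂ) (q 2))
        + z q * ((starRingEnd ℂ) (q 0)
            + q 1 * ((starRingEnd ℂ) (q 1) + (starRingEnd ℂ) (q 2))
            - q 0 * (starRingEnd ℂ) (q 0))
        + (q 2 - q 0 * q 1) = 0)
    (hreg : ∀ q ∈ U,
      2 * z q * (starRingEnd ℂ) (q 0) * ((starRingEnd ℂ) (q 1) + (starRingEnd ℂ) (q 2))
        + (starRingEnd ℂ) (q 0)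
        + q 1 * ((starRingEnd ℂ) (q 1) + (starRingEnd ℂ) (q 2))
        - q 0 * (starRingEnd ℂ) (q 0) ≠ 0) :
    ∀ q ∈ U,
      (∑ j, ((fderiv ℝ z q (Pi.single j 1)) ^ 2
            + (fderiv ℝ z q (Pi.single j Complex.I)) ^ 2) = 0) ∧
      (∑ j, (fderiv ℝ (fun p => fderiv ℝ z p (Pi.single j 1)) q (Pi.single j 1)
            + fderiv ℝ (fun p => fderiv ℝ z p (Pi.single j Complex.I)) q
                (Pi.single j Complex.I)) = 0) := by
  have hK : ∀ p ∈ U, ∀ v, qAf z p * fderiv ℝ z p v + qNf z p v = 0 :=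
    fun p hp v => key1 U hU z hz hsol p hp v
  have hreg' : ∀ p ∈ U, qAf z p ≠ 0 := fun p hp => hreg p hp
  intro q hq
  exact ⟨part1 z q (hreg' q hq) (hK q hq), final_sum U hU z hz hK hreg' q hq⟩

end
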